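/- With the notation above, h is injective outside the countable exceptional set Q, the preimage of any point of h(Q) has cardinality at most two, and the inverse map h^{-1} is continuous on [0,1] \ h(Q). -/

import Mathlib

open MeasureTheory

/-! One-sided pasts are elements of `ℕ → Fin (K+1)`, where index `n` represents
position `-n` (so index `0` is position `0`).  The alphabet `{1, …, 𝒦}` with
`𝒦 = K + 1` is modelled by `Fin (K+1)`, the symbol `j` corresponding to `j - 1`. -/

/-- Strict lexicographic order reading positions `0, -1, -2, …`. -/
def lexLt {K : ℕ} (x y : ℕ → Fin (K+1)) : Prop :=
  ∃ m, (∀ i, i < m → x i = y i) ∧ x m < y m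

/-- Lexicographic order. -/
def lexLe {K : ℕ} (x y : ℕ → Fin (K+1)) : Prop := x = y ∨ lexLt x y

/-- `J(x) = {y : y ≤ x}` in the lexicographic order. -/
def lowerSet {K : ℕ} (x : ℕ → Fin (K+1)) : Set (ℕ → Fin (K+1)) := {y | lexLe y x}

/-- The map `h(x) = P(J(x))`. -/
noncomputable def hmap {K : ℕ} (P : Measure (ℕ → Fin (K+1))) (x : ℕ → Fin (K+1)) : ℝ :=
  (P (lowerSet x)).toReal

/-- `P` has no atoms. -/
def Atomless {K : ℕ} (P : Measure (ℕ → Fin (K+1))) : Prop := ∀ x, P {x} = 0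

/-- `P` gives positive mass to every cylinder. -/
def PosCylinders {K : ℕ} (P : Measure (ℕ → Fin (K+1))) : Prop :=
  ∀ (k : ℕ) (w : ℕ → Fin (K+1)), 0 < P {z | ∀ i, i ≤ k → z i = w i}

/-- The countable exceptional set `𝒬`: sequences whose tail (to the left) is
eventually constantly the largest symbol `𝒦` or constantly the smallest symbol `1`. -/
def exceptional (K : ℕ) : Set (ℕ → Fin (K+1)) :=
  {x | (∃ m, ∀ n, m ≤ n → x n = Fin.last K) ∨ (∃ m, ∀ n, m ≤ n → x n = 0)}

/-- The shift dropping the coordinate at position `0`. -/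
def shiftP {K : ℕ} (x : ℕ → Fin (K+1)) : ℕ → Fin (K+1) := x ∘ Nat.succ

/-- The sequence `t_{-∞}^{-1} a` : symbol `a` at position `0` preceded by infinitely many `t`'s. -/
def withTail {K : ℕ} (t a : Fin (K+1)) : ℕ → Fin (K+1) :=
  fun n => if n = 0 then a else t

/-- The sequence `t_{-∞}^{-(k+2)} a z_{-k}^0` : the word `z` on positions `-k, …, 0`
(`z i` being the symbol at position `-i` for `i ≤ k`), preceded by `a`, preceded by
infinitely many `t`'s. -/
def withSuffix {K : ℕ} (t a : Fin (K+1)) (k : ℕ) (z : ℕ → Fin (K+1)) : ℕ → Fin (K+1) :=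
  fun n => if n ≤ k then z n else if n = k + 1 then a else t

/-- Prepending a symbol at position `0`: the sequence `x_{-∞}^{-1} a`. -/
def consP {K : ℕ} (a : Fin (K+1)) (x : ℕ → Fin (K+1)) : ℕ → Fin (K+1) :=
  fun n => if n = 0 then a else x (n - 1)

/-- `p` is a (measurable, normalized) family of transition probabilities. -/
def IsTransFamily {K : ℕ} (p : Fin (K+1) → (ℕ → Fin (K+1)) → ℝ) : Prop :=
  (∀ a, Measurable (p a)) ∧ (∀ a x, 0 ≤ p a x) ∧ (∀ x, ∑ a, p a x = 1)

/-- Non-nullness: the infimum of the transition probabilities is positive. -/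
def NonNull {K : ℕ} (p : Fin (K+1) → (ℕ → Fin (K+1)) → ℝ) : Prop :=
  ∃ ε > (0:ℝ), ∀ a x, ε ≤ p a x

/-- `β` is a continuity rate for `p` : pasts agreeing on the `k` most recent symbols
give transition probabilities within `β k`. -/
def ContRate {K : ℕ} (p : Fin (K+1) → (ℕ → Fin (K+1)) → ℝ) (β : ℕ → ℝ) : Prop :=
  ∀ k a (x y : ℕ → Fin (K+1)), (∀ i, i < k → x i = y i) → |p a x - p a y| ≤ β k

/-- The (one-sided) stationary measure `P` is compatible with the family `p`. -/
def Compatible {K : ℕ} (p : Fin (K+1) → (ℕ → Fin (K+1)) → ℝ)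
    (P : Measure (ℕ → Fin (K+1))) : Prop :=
  ∀ f : (ℕ → Fin (K+1)) → ℝ, Continuous f →
    ∫ z, f z ∂P = ∫ x, (∑ a, p a x * f (consP a x)) ∂(P.map shiftP)

/-- The endpoints `η_0 = 0 < η_1 < … < η_𝒦 = 1` of the monotonicity intervals,
`η_j = h(𝒦_{-∞}^{-1} j)` for `1 ≤ j ≤ 𝒦 - 1` (here `𝒦 = K + 1`). -/
noncomputable def eta {K : ℕ} (P : Measure (ℕ → Fin (K+1))) : ℕ → ℝ :=
  fun j => if h : 0 < j ∧ j < K + 1 then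
      hmap P (withTail (Fin.last K) ⟨j - 1, by omega⟩)
    else if j = 0 then 0 else 1


/-! ### Auxiliary lemmas -/

section Aux

variable {K : ℕ}

lemma lexLt_irrefl (x : ℕ → Fin (K+1)) : ¬ lexLt x x := by
  rintro ⟨m, -, hm⟩; exact lt_irrefl _ hm

lemma lexLt_asymm {x y : ℕ → Fin (K+1)} (h1 : lexLt x y) (h2 : lexLt y x) : False := by
  obtain ⟨m, hm, hml⟩ := h1
  obtain ⟨n, hn, hnl⟩ := h2
  rcases lt_trichotomy m n with h | rfl | h
  · rw [hn m h] at hml; exact lt_irrefl _ hml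
  · exact absurd hnl hml.asymm
  · rw [hm n h] at hnl; exact lt_irrefl _ hnl

lemma lexLt_trichot (x y : ℕ → Fin (K+1)) : x = y ∨ lexLt x y ∨ lexLt y x := by
  by_cases h : x = y
  · exact Or.inl h
  · have hne : ∃ n, x n ≠ y n := by
      by_contra hc; push_neg at hc; exact h (funext hc)
    have hm : x (Nat.find hne) ≠ y (Nat.find hne) := Nat.find_spec hne
    have hlt : ∀ i, i < Nat.find hne → x i = y i := fun i hi => by
      by_contra hc; exact Nat.find_min hne hi hc
    rcases lt_or_gt_of_ne hm with h' | h'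
    · exact Or.inr (Or.inl ⟨_, hlt, h'⟩)
    · exact Or.inr (Or.inr ⟨_, fun i hi => (hlt i hi).symm, h'⟩)

lemma lexLt_trans {x y z : ℕ → Fin (K+1)} (h1 : lexLt x y) (h2 : lexLt y z) : lexLt x z := by
  obtain ⟨m, hm, hml⟩ := h1
  obtain ⟨n, hn, hnl⟩ := h2
  rcases lt_trichotomy m n with h | rfl | h
  · exact ⟨m, fun i hi => (hm i hi).trans (hn i (hi.trans h)),
      by rw [← hn m h]; exact hml⟩
  · exact ⟨m, fun i hi => (hm i hi).trans (hn i hi), hml.trans hnl⟩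
  · exact ⟨n, fun i hi => (hm i (hi.trans h)).trans (hn i hi),
      by rw [hm n h]; exact hnl⟩

lemma lexLe_trans {x y z : ℕ → Fin (K+1)} (h1 : lexLe x y) (h2 : lexLe y z) : lexLe x z := by
  rcases h1 with rfl | h1
  · exact h2
  · rcases h2 with rfl | h2
    · exact Or.inr h1
    · exact Or.inr (lexLt_trans h1 h2)

lemma lowerSet_mono {x y : ℕ → Fin (K+1)} (h : lexLe x y) : lowerSet x ⊆ lowerSet y :=
  fun _ hz => lexLe_trans hz h

lemma hmap_mono {P : Measure (ℕ → Fin (K+1))} [IsProbabilityMeasure P]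
    {x y : ℕ → Fin (K+1)} (h : lexLe x y) : hmap P x ≤ hmap P y :=
  ENNReal.toReal_mono (measure_ne_top P _) (measure_mono (lowerSet_mono h))

/-- Adjacent pair: `y` is the immediate lexicographic successor of `x`. -/
def Adj {K : ℕ} (x y : ℕ → Fin (K+1)) : Prop :=
  ∃ m, (∀ i, i < m → x i = y i) ∧ (y m).val = (x m).val + 1 ∧
    ∀ n, m < n → x n = Fin.last K ∧ y n = 0

lemma Adj.lexLt {x y : ℕ → Fin (K+1)} (h : Adj x y) : lexLt x y := by
  obtain ⟨m, hm, hv, -⟩ := h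
  exact ⟨m, hm, Fin.lt_def.mpr (by omega)⟩

lemma Adj.mem_exc_left {x y : ℕ → Fin (K+1)} (h : Adj x y) : x ∈ exceptional K := by
  obtain ⟨m, -, -, h⟩ := h
  exact Or.inl ⟨m+1, fun n hn => (h n (by omega)).1⟩

lemma Adj.mem_exc_right {x y : ℕ → Fin (K+1)} (h : Adj x y) : y ∈ exceptional K := by
  obtain ⟨m, -, -, h⟩ := h
  exact Or.inr ⟨m+1, fun n hn => (h n (by omega)).2⟩

lemma adj_no_between {x y z : ℕ → Fin (K+1)} (h : Adj x y)
    (h1 : lexLt x z) (h2 : lexLt z y) : False := by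
  obtain ⟨m, hm, hv, ht⟩ := h
  obtain ⟨m₁, hm₁, hl₁⟩ := h1
  obtain ⟨m₂, hm₂, hl₂⟩ := h2
  rcases lt_trichotomy m₁ m with hc | rfl | hc
  · -- m₁ < m
    rcases lt_trichotomy m₂ m₁ with hd | rfl | hd
    · have e : z m₂ = y m₂ := (hm₁ m₂ hd).symm.trans (hm m₂ (hd.trans hc))
      rw [e] at hl₂; exact lt_irrefl _ hl₂
    · rw [← hm m₂ hc] at hl₂; exact absurd hl₂ hl₁.asymm
    · have e : z m₁ = y m₁ := hm₂ m₁ hd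
      rw [e, ← hm m₁ hc] at hl₁; exact lt_irrefl _ hl₁
  · -- m₁ = m
    rcases lt_trichotomy m₂ m₁ with hd | rfl | hd
    · have e : z m₂ = y m₂ := (hm₁ m₂ hd).symm.trans (hm m₂ hd)
      rw [e] at hl₂; exact lt_irrefl _ hl₂
    · have e1 := Fin.lt_def.mp hl₁
      have e2 := Fin.lt_def.mp hl₂
      omega
    · rw [(ht m₂ hd).2] at hl₂
      exact absurd hl₂ (Fin.not_lt_zero _)
  · -- m < m₁
    rw [(ht m₁ hc).1] at hl₁
    exact absurd hl₁ (not_lt.mpr (Fin.le_last _))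

lemma exists_cyl_between (hK : 0 < K) {x y : ℕ → Fin (K+1)}
    (hxy : lexLt x y) (hna : ¬ Adj x y) :
    ∃ (k : ℕ) (w : ℕ → Fin (K+1)), ∀ z, (∀ i, i ≤ k → z i = w i) →
      lexLt x z ∧ lexLt z y := by
  obtain ⟨m, hm, hlt⟩ := hxy
  have hvlt : (x m).val < (y m).val := Fin.lt_def.mp hlt
  rcases Nat.lt_or_ge ((x m).val + 1) ((y m).val) with hgap | hmid
  · -- a gap at position m
    have hb : (x m).val + 1 < K + 1 := by have := (y m).isLt; omega
    refine ⟨m, Function.update x m ⟨(x m).val + 1, hb⟩, fun z hz => ?_⟩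
    have hzm : z m = ⟨(x m).val + 1, hb⟩ := by
      rw [hz m le_rfl, Function.update_self]
    have hzi : ∀ i, i < m → z i = x i := fun i hi => by
      rw [hz i hi.le, Function.update_of_ne hi.ne]
    constructor
    · exact ⟨m, fun i hi => (hzi i hi).symm, by rw [hzm]; exact Fin.lt_def.mpr (by simp)⟩
    · exact ⟨m, fun i hi => (hzi i hi).trans (hm i hi), by
        rw [hzm]; exact Fin.lt_def.mpr (by simpa using hgap)⟩
  · have heq : (y m).val = (x m).val + 1 := by omega
    by_cases hb : ∃ n, m < n ∧ x n ≠ Fin.last K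
    · obtain ⟨n, hn, hxn⟩ := hb
      have hvK : (x n).val < K := by
        have h1 : (x n).val ≠ K := fun h => hxn (Fin.ext (by simpa using h))
        have := (x n).isLt; omega
      refine ⟨n, Function.update x n ⟨(x n).val + 1, by omega⟩, fun z hz => ?_⟩
      have hzn : z n = ⟨(x n).val + 1, by omega⟩ := by
        rw [hz n le_rfl, Function.update_self]
      have hzi : ∀ i, i < n → z i = x i := fun i hi => by
        rw [hz i hi.le, Function.update_of_ne hi.ne]
      constructor
      · exact ⟨n, fun i hi => (hzi i hi).symm, by rw [hzn]; exact Fin.lt_def.mpr (by simp)⟩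
      · exact ⟨m, fun i hi => (hzi i (hi.trans hn)).trans (hm i hi), by
          rw [hzi m hn]; exact hlt⟩
    · push_neg at hb
      by_cases hc : ∃ n, m < n ∧ y n ≠ 0
      · obtain ⟨n, hn, hyn⟩ := hc
        have hv0 : 0 < (y n).val := by
          rcases Nat.eq_zero_or_pos (y n).val with h | h
          · exact absurd (Fin.ext (by simpa using h)) hyn
          · exact h
        refine ⟨n, Function.update y n ⟨(y n).val - 1, by have := (y n).isLt; omega⟩,
          fun z hz => ?_⟩
        have hzn : z n = ⟨(y n).val - 1, by have := (y n).isLt; omega⟩ := by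
          rw [hz n le_rfl, Function.update_self]
        have hzi : ∀ i, i < n → z i = y i := fun i hi => by
          rw [hz i hi.le, Function.update_of_ne hi.ne]
        constructor
        · exact ⟨m, fun i hi => (hm i hi).trans (hzi i (hi.trans hn)).symm, by
            rw [hzi m hn]; exact hlt⟩
        · exact ⟨n, hzi, by rw [hzn]; exact Fin.lt_def.mpr (by show (y n).val - 1 < (y n).val; omega)⟩
      · push_neg at hc
        exact absurd ⟨m, hm, heq, fun n hn => ⟨hb n hn, hc n hn⟩⟩ hna

lemma exists_nonQ_between (hK : 0 < K) {x y : ℕ → Fin (K+1)}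
    (hxy : lexLt x y) (hna : ¬ Adj x y) :
    ∃ z, z ∉ exceptional K ∧ lexLt x z ∧ lexLt z y := by
  obtain ⟨k, w, hw⟩ := exists_cyl_between hK hxy hna
  set z : ℕ → Fin (K+1) :=
    fun n => if n ≤ k then w n else if Even n then 0 else Fin.last K with hzdef
  have hmem : ∀ i, i ≤ k → z i = w i := fun i hi => by simp [hzdef, hi]
  obtain ⟨h1, h2⟩ := hw z hmem
  have hlast0 : (Fin.last K : Fin (K+1)) ≠ 0 := by
    intro h; have := congrArg Fin.val h; simp at this; omega
  refine ⟨z, ?_, h1, h2⟩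
  rintro (⟨m, hm⟩ | ⟨m, hm⟩)
  · have he : z (2*(m+k+1)) = 0 := by
      have h1 : ¬ (2*(m+k+1) ≤ k) := by omega
      have h2 : Even (2*(m+k+1)) := even_two_mul _
      simp [hzdef, h1, h2]
    have := hm (2*(m+k+1)) (by omega)
    rw [he] at this; exact hlast0 this.symm
  · have he : z (2*(m+k+1)+1) = Fin.last K := by
      have h1 : ¬ (2*(m+k+1)+1 ≤ k) := by omega
      have h2 : ¬ Even (2*(m+k+1)+1) := by
        simp [Nat.even_add_one, parity_simps]
      simp [hzdef, h1, h2]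
    have := hm (2*(m+k+1)+1) (by omega)
    rw [he] at this; exact hlast0 this

lemma cyl_measurable (k : ℕ) (w : ℕ → Fin (K+1)) :
    MeasurableSet {z : ℕ → Fin (K+1) | ∀ i, i ≤ k → z i = w i} := by
  have : {z : ℕ → Fin (K+1) | ∀ i, i ≤ k → z i = w i}
      = ⋂ i ∈ Finset.range (k+1), (fun z : ℕ → Fin (K+1) => z i) ⁻¹' {w i} := by
    ext z; simp [Nat.lt_succ_iff]
  rw [this]
  exact MeasurableSet.biInter (Set.to_countable _)
    (fun i _ => (measurable_pi_apply i) (measurableSet_singleton _))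

lemma hmap_lt (hK : 0 < K) {P : Measure (ℕ → Fin (K+1))} [IsProbabilityMeasure P]
    (hP' : PosCylinders P) {x y : ℕ → Fin (K+1)}
    (hxy : lexLt x y) (hna : ¬ Adj x y) : hmap P x < hmap P y := by
  obtain ⟨k, w, hw⟩ := exists_cyl_between hK hxy hna
  set C : Set (ℕ → Fin (K+1)) := {z | ∀ i, i ≤ k → z i = w i} with hC
  have hCmeas : MeasurableSet C := cyl_measurable k w
  have hdisj : Disjoint (lowerSet x) C := by
    rw [Set.disjoint_left]
    rintro z hz hzC
    rcases hz with rfl | hz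
    · exact lexLt_irrefl _ (hw _ hzC).1
    · exact lexLt_asymm hz (hw _ hzC).1
  have hsub : lowerSet x ∪ C ⊆ lowerSet y := by
    rintro z (hz | hz)
    · exact lowerSet_mono (Or.inr hxy) hz
    · exact Or.inr (hw z hz).2
  have hpos : 0 < P C := hP' k w
  have hle : P (lowerSet x) + P C ≤ P (lowerSet y) := by
    rw [← measure_union hdisj hCmeas]
    exact measure_mono hsub
  show (P (lowerSet x)).toReal < (P (lowerSet y)).toReal
  calc (P (lowerSet x)).toReal
      < (P (lowerSet x)).toReal + (P C).toReal := by
        have : 0 < (P C).toReal := ENNReal.toReal_pos hpos.ne' (measure_ne_top P _)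
        linarith
    _ = (P (lowerSet x) + P C).toReal :=
        (ENNReal.toReal_add (measure_ne_top P _) (measure_ne_top P _)).symm
    _ ≤ (P (lowerSet y)).toReal := ENNReal.toReal_mono (measure_ne_top P _) hle

lemma adj_hmap_eq {P : Measure (ℕ → Fin (K+1))} [IsProbabilityMeasure P]
    (hP : Atomless P) {x y : ℕ → Fin (K+1)} (h : Adj x y) : hmap P x = hmap P y := by
  have hxy : lexLt x y := h.lexLt
  have hsub : lowerSet y ⊆ lowerSet x ∪ {y} := by
    rintro z hz
    rcases hz with rfl | hz
    · exact Or.inr rfl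
    · rcases lexLt_trichot x z with rfl | h1 | h1
      · exact Or.inl (Or.inl rfl)
      · exact (adj_no_between h h1 hz).elim
      · exact Or.inl (Or.inr h1)
  have h1 : P (lowerSet y) ≤ P (lowerSet x) := by
    calc P (lowerSet y) ≤ P (lowerSet x ∪ {y}) := measure_mono hsub
      _ ≤ P (lowerSet x) + P {y} := measure_union_le _ _
      _ = P (lowerSet x) := by rw [hP y, add_zero]
  have h2 : P (lowerSet x) ≤ P (lowerSet y) := measure_mono (lowerSet_mono (Or.inr hxy))
  show (P (lowerSet x)).toReal = (P (lowerSet y)).toReal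
  rw [le_antisymm h2 h1]

/-- The basic cylinder of length `N` around `x`. -/
def cylN {K : ℕ} (x : ℕ → Fin (K+1)) (N : ℕ) : Set (ℕ → Fin (K+1)) :=
  {z | ∀ i, i < N → z i = x i}

lemma cylN_measurable (x : ℕ → Fin (K+1)) (N : ℕ) : MeasurableSet (cylN x N) := by
  have : cylN x N
      = ⋂ i ∈ Finset.range N, (fun z : ℕ → Fin (K+1) => z i) ⁻¹' {x i} := by
    ext z; simp [cylN]
  rw [this]
  exact MeasurableSet.biInter (Set.to_countable _)
    (fun i _ => (measurable_pi_apply i) (measurableSet_singleton _))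

lemma lower_subset_of_cyl {x z : ℕ → Fin (K+1)} {N : ℕ} (hz : z ∈ cylN x N) :
    lowerSet z ⊆ lowerSet x ∪ cylN x N := by
  intro w hw
  rcases lexLt_trichot x w with rfl | h1 | h1
  · exact Or.inl (Or.inl rfl)
  · right
    obtain ⟨m, hm, hml⟩ := h1
    have hmN : N ≤ m := by
      by_contra hNm
      push_neg at hNm
      have hzw : lexLt z w := ⟨m, fun i hi => (hz i (hi.trans hNm)).trans (hm i hi),
        by rw [hz m hNm]; exact hml⟩
      rcases hw with rfl | hwz
      · exact lexLt_irrefl _ hzw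
      · exact lexLt_asymm hzw hwz
    exact fun i hi => (hm i (lt_of_lt_of_le hi hmN)).symm
  · exact Or.inl (Or.inr h1)

lemma hmap_close {P : Measure (ℕ → Fin (K+1))} [IsProbabilityMeasure P]
    {x z : ℕ → Fin (K+1)} {N : ℕ} (hz : z ∈ cylN x N) :
    |hmap P z - hmap P x| ≤ (P (cylN x N)).toReal := by
  have hz' : x ∈ cylN z N := fun i hi => (hz i hi).symm
  have hcyl_eq : cylN z N = cylN x N := by
    ext w
    exact ⟨fun hw i hi => (hw i hi).trans (hz i hi),
      fun hw i hi => (hw i hi).trans (hz i hi).symm⟩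
  have key : ∀ a b : ℕ → Fin (K+1), a ∈ cylN b N →
      hmap P a ≤ hmap P b + (P (cylN b N)).toReal := by
    intro a b hab
    have hb : P (lowerSet a) ≤ P (lowerSet b) + P (cylN b N) :=
      (measure_mono (lower_subset_of_cyl hab)).trans (measure_union_le _ _)
    show (P (lowerSet a)).toReal ≤ (P (lowerSet b)).toReal + (P (cylN b N)).toReal
    rw [← ENNReal.toReal_add (measure_ne_top P _) (measure_ne_top P _)]
    exact ENNReal.toReal_mono
      (ENNReal.add_ne_top.mpr ⟨measure_ne_top P _, measure_ne_top P _⟩) hb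
  have h1 := key z x hz
  have h2 := key x z hz'
  rw [hcyl_eq] at h2
  rw [abs_sub_le_iff]
  constructor <;> linarith

lemma hmap_continuous {P : Measure (ℕ → Fin (K+1))} [IsProbabilityMeasure P]
    (hP : Atomless P) : Continuous (hmap P) := by
  rw [continuous_iff_continuousAt]
  intro x
  rw [ContinuousAt, Metric.tendsto_nhds]
  intro ε hε
  have hmono : Antitone (fun N => cylN x N) :=
    fun a b hab z hz i hi => hz i (lt_of_lt_of_le hi hab)
  have hinter : ⋂ N, cylN x N = {x} := by
    ext z
    simp only [Set.mem_iInter, Set.mem_singleton_iff]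
    constructor
    · intro h; funext i; exact h (i+1) i (Nat.lt_succ_self i)
    · rintro rfl; exact fun N i hi => rfl
  have htend : Filter.Tendsto (fun N => P (cylN x N)) Filter.atTop (nhds 0) := by
    have := tendsto_measure_iInter_atTop (μ := P)
      (fun N => (cylN_measurable x N).nullMeasurableSet) hmono ⟨0, measure_ne_top P _⟩
    rwa [hinter, hP x] at this
  have hev : ∀ᶠ N in Filter.atTop, P (cylN x N) < ENNReal.ofReal ε :=
    htend.eventually_lt_const (ENNReal.ofReal_pos.mpr hε)
  obtain ⟨N, hN⟩ := hev.exists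
  have hopen : IsOpen (cylN x N) := by
    have : cylN x N
        = ⋂ i ∈ Finset.range N, (fun z : ℕ → Fin (K+1) => z i) ⁻¹' {x i} := by
      ext z; simp [cylN]
    rw [this]
    exact isOpen_biInter_finset
      (fun i _ => (continuous_apply i).isOpen_preimage _ (isOpen_discrete _))
  have hmem : x ∈ cylN x N := fun i hi => rfl
  filter_upwards [hopen.mem_nhds hmem] with z hz
  have hclose := hmap_close (P := P) hz
  have hlt : (P (cylN x N)).toReal < ε := by
    have := ENNReal.toReal_strict_mono ENNReal.ofReal_ne_top hN
    rwa [ENNReal.toReal_ofReal hε.le] at this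
  calc dist (hmap P z) (hmap P x) = |hmap P z - hmap P x| := Real.dist_eq _ _
    _ ≤ (P (cylN x N)).toReal := hclose
    _ < ε := hlt

lemma hmap_bot {P : Measure (ℕ → Fin (K+1))} [IsProbabilityMeasure P]
    (hP : Atomless P) : hmap P (fun _ => (0 : Fin (K+1))) = 0 := by
  have hls : lowerSet (fun _ => (0 : Fin (K+1))) = {fun _ => (0 : Fin (K+1))} := by
    ext z
    constructor
    · rintro (rfl | ⟨m, -, hm⟩)
      · rfl
      · exact absurd hm (Fin.not_lt_zero _)
    · rintro rfl; exact Or.inl rfl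
  show (P (lowerSet _)).toReal = 0
  rw [hls, hP]; simp

lemma hmap_top {P : Measure (ℕ → Fin (K+1))} [IsProbabilityMeasure P] :
    hmap P (fun _ => Fin.last K) = 1 := by
  have hls : lowerSet (fun _ => (Fin.last K : Fin (K+1))) = Set.univ := by
    ext z
    simp only [Set.mem_univ, iff_true]
    rcases lexLt_trichot z (fun _ => Fin.last K) with h | h | h
    · exact Or.inl h
    · exact Or.inr h
    · obtain ⟨m, -, hm⟩ := h
      exact absurd hm (not_lt.mpr (Fin.le_last _))
  show (P (lowerSet _)).toReal = 1
  rw [hls, measure_univ]; simp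

lemma hmap_surj (hK : 0 < K) {P : Measure (ℕ → Fin (K+1))} [IsProbabilityMeasure P]
    (hP : Atomless P) (hP' : PosCylinders P)
    {t : ℝ} (ht0 : 0 ≤ t) (ht1 : t ≤ 1) (htQ : t ∉ hmap P '' exceptional K) :
    ∃ x, hmap P x = t := by
  have hcont := hmap_continuous (P := P) hP
  have hA : IsClosed {z : ℕ → Fin (K+1) | hmap P z ≤ t} := isClosed_le hcont continuous_const
  have hAne : {z : ℕ → Fin (K+1) | hmap P z ≤ t}.Nonempty :=
    ⟨fun _ => 0, by simpa [Set.mem_setOf_eq, hmap_bot hP] using ht0⟩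
  obtain ⟨x₀, hx₀A, hx₀max⟩ := hA.isCompact.exists_isMaxOn hAne hcont.continuousOn
  by_cases hc : hmap P x₀ = t
  · exact ⟨x₀, hc⟩
  have hB : IsClosed {z : ℕ → Fin (K+1) | t ≤ hmap P z} := isClosed_le continuous_const hcont
  have hBne : {z : ℕ → Fin (K+1) | t ≤ hmap P z}.Nonempty :=
    ⟨fun _ => Fin.last K, by simpa [Set.mem_setOf_eq, hmap_top (P := P)] using ht1⟩
  obtain ⟨y₀, hy₀B, hy₀min⟩ := hB.isCompact.exists_isMinOn hBne hcont.continuousOn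
  by_cases hd : hmap P y₀ = t
  · exact ⟨y₀, hd⟩
  exfalso
  have hcl : hmap P x₀ < t := lt_of_le_of_ne hx₀A hc
  have hdl : t < hmap P y₀ := lt_of_le_of_ne hy₀B (Ne.symm hd)
  have hxy : lexLt x₀ y₀ := by
    rcases lexLt_trichot x₀ y₀ with he | h | h
    · rw [he] at hcl; linarith
    · exact h
    · have := hmap_mono (P := P) (Or.inr h); linarith
  have hna : ¬ Adj x₀ y₀ := fun hadj => by
    have := adj_hmap_eq hP hadj; linarith
  obtain ⟨z, hzQ, hz1, hz2⟩ := exists_nonQ_between hK hxy hna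
  have hna1 : ¬ Adj x₀ z := fun h => hzQ h.mem_exc_right
  have hna2 : ¬ Adj z y₀ := fun h => hzQ h.mem_exc_left
  have hlt1 : hmap P x₀ < hmap P z := hmap_lt hK hP' hz1 hna1
  have hlt2 : hmap P z < hmap P y₀ := hmap_lt hK hP' hz2 hna2
  rcases le_total (hmap P z) t with h | h
  · exact absurd (hx₀max h) (not_le.mpr hlt1)
  · exact absurd (hy₀min h) (not_le.mpr hlt2)

lemma no_double_adj (hK : 0 < K) {P : Measure (ℕ → Fin (K+1))} [IsProbabilityMeasure P]
    (hP' : PosCylinders P) {p q r : ℕ → Fin (K+1)}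
    (hpq : lexLt p q) (hqr : lexLt q r)
    (e1 : hmap P p = hmap P q) (e2 : hmap P q = hmap P r) : False := by
  have a1 : Adj p q := by
    by_contra h; exact absurd e1 (ne_of_lt (hmap_lt hK hP' hpq h))
  have a2 : Adj q r := by
    by_contra h; exact absurd e2 (ne_of_lt (hmap_lt hK hP' hqr h))
  obtain ⟨m₁, -, -, h1⟩ := a1
  obtain ⟨m₂, -, -, h2⟩ := a2
  have e3 : q (m₁ + m₂ + 1) = 0 := (h1 _ (by omega)).2
  have e4 : q (m₁ + m₂ + 1) = Fin.last K := (h2 _ (by omega)).1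
  rw [e3] at e4
  have := congrArg Fin.val e4
  simp at this
  omega

lemma agree_of_between {x₀ x u v : ℕ → Fin (K+1)} {N : ℕ}
    (huN : ∀ n, n < N → u n = x₀ n) (hu0 : ∀ n, N ≤ n → u n = 0)
    (hvN : ∀ n, n < N → v n = x₀ n) (hvl : ∀ n, N ≤ n → v n = Fin.last K)
    (h1 : lexLe u x) (h2 : lexLe x v) :
    ∀ i, i < N → x i = x₀ i := by
  by_contra hcon
  push_neg at hcon
  have hex : ∃ j, j < N ∧ x j ≠ x₀ j := hcon
  have hm := Nat.find_spec hex
  set m := Nat.find hex with hmdef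
  have hagree : ∀ i, i < m → x i = x₀ i := fun i hi => by
    by_contra hcc
    exact Nat.find_min hex hi ⟨lt_trans hi hm.1, hcc⟩
  rcases lt_or_gt_of_ne hm.2 with hlt | hgt
  · have hxu : lexLt x u := ⟨m, fun i hi => (hagree i hi).trans (huN i (hi.trans hm.1)).symm,
      by rw [huN m hm.1]; exact hlt⟩
    rcases h1 with he | h1
    · rw [he] at hxu; exact lexLt_irrefl _ hxu
    · exact lexLt_asymm hxu h1
  · have hvx : lexLt v x := ⟨m, fun i hi => (hvN i (hi.trans hm.1)).trans (hagree i hi).symm,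
      by rw [hvN m hm.1]; exact hgt⟩
    rcases h2 with he | h2
    · rw [← he] at hvx; exact lexLt_irrefl _ hvx
    · exact lexLt_asymm h2 hvx

end Aux

/-- `h` is injective outside the countable exceptional set `𝒬`, the
preimage of any point of `h(𝒬)` has cardinality at most two, and the inverse map
`h⁻¹` is continuous on `[0,1] \ h(𝒬)`. -/
theorem hmap_injective_and_inverse_continuous (K : ℕ) (P : Measure (ℕ → Fin (K+1)))
    [IsProbabilityMeasure P] (hP : Atomless P) (hP' : PosCylinders P) :
    (∀ x y : ℕ → Fin (K+1), x ∉ exceptional K → y ∉ exceptional K →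
        hmap P x = hmap P y → x = y) ∧
    (∀ t ∈ hmap P '' exceptional K, ∃ x y : ℕ → Fin (K+1),
        hmap P ⁻¹' {t} ⊆ {x, y}) ∧
    (∃ g : ℝ → (ℕ → Fin (K+1)),
        (∀ t ∈ Set.Icc (0:ℝ) 1 \ hmap P '' exceptional K, hmap P (g t) = t) ∧
        ContinuousOn g (Set.Icc (0:ℝ) 1 \ hmap P '' exceptional K)) := by
  classical
  rcases Nat.eq_zero_or_pos K with rfl | hK
  · exfalso
    have h1 : ({(fun _ => 0 : ℕ → Fin 1)} : Set (ℕ → Fin 1)) = Set.univ := by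
      ext z
      simp only [Set.mem_singleton_iff, Set.mem_univ, iff_true]
      exact Subsingleton.elim _ _
    have h2 := hP (fun _ => 0)
    rw [h1, measure_univ] at h2
    exact one_ne_zero h2
  refine ⟨?_, ?_, ?_⟩
  · -- injectivity off Q
    intro x y hx hy hxy
    rcases lexLt_trichot x y with he | h | h
    · exact he
    · exact absurd hxy (ne_of_lt (hmap_lt hK hP' h (fun ha => hx ha.mem_exc_left)))
    · exact absurd hxy.symm (ne_of_lt (hmap_lt hK hP' h (fun ha => hy ha.mem_exc_left)))
  · -- fibers have at most two points
    intro t _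
    by_contra hcon
    push_neg at hcon
    have get3 : ∀ x y : ℕ → Fin (K+1), ∃ z, hmap P z = t ∧ z ≠ x ∧ z ≠ y := by
      intro x y
      obtain ⟨z, hz1, hz2⟩ := Set.not_subset.mp (hcon x y)
      simp only [Set.mem_insert_iff, Set.mem_singleton_iff, not_or] at hz2
      exact ⟨z, hz1, hz2.1, hz2.2⟩
    obtain ⟨a, ha, -, -⟩ := get3 (fun _ => 0) (fun _ => 0)
    obtain ⟨b, hb, hba, -⟩ := get3 a a
    obtain ⟨c, hc, hca, hcb⟩ := get3 a b
    have eab : hmap P a = hmap P b := ha.trans hb.symm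
    have ebc : hmap P b = hmap P c := hb.trans hc.symm
    have eac : hmap P a = hmap P c := ha.trans hc.symm
    rcases lexLt_trichot a b with he | hab | hab
    · exact hba he.symm
    · rcases lexLt_trichot b c with he | hbc | hbc
      · exact hcb he.symm
      · exact no_double_adj hK hP' hab hbc eab ebc
      · rcases lexLt_trichot a c with he | hac | hac
        · exact hca he.symm
        · exact no_double_adj hK hP' hac hbc eac ebc.symm
        · exact no_double_adj hK hP' hac hab eac.symm eab
    · rcases lexLt_trichot a c with he | hac | hac
      · exact hca he.symm
      · exact no_double_adj hK hP' hab hac eab.symm eac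
      · rcases lexLt_trichot b c with he | hbc | hbc
        · exact hcb he.symm
        · exact no_double_adj hK hP' hbc hac ebc eac.symm
        · exact no_double_adj hK hP' hbc hab ebc.symm eab.symm
  · -- continuous inverse
    set S := Set.Icc (0:ℝ) 1 \ hmap P '' exceptional K with hSdef
    set g : ℝ → (ℕ → Fin (K+1)) :=
      fun t => if h : ∃ x, hmap P x = t then h.choose else (fun _ => 0) with hgdef
    have hginv : ∀ t ∈ S, hmap P (g t) = t := by
      intro t ht
      have hex : ∃ x, hmap P x = t := hmap_surj hK hP hP' ht.1.1 ht.1.2 ht.2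
      simp only [hgdef, dif_pos hex]
      exact hex.choose_spec
    refine ⟨g, hginv, ?_⟩
    intro t₀ ht₀
    have hx₀ : hmap P (g t₀) = t₀ := hginv t₀ ht₀
    have hx₀Q : g t₀ ∉ exceptional K := fun hmem => ht₀.2 ⟨g t₀, hmem, hx₀⟩
    show Filter.Tendsto g (nhdsWithin t₀ S) (nhds (g t₀))
    rw [tendsto_pi_nhds]
    intro i
    set N := i + 1 with hNdef
    set u : ℕ → Fin (K+1) := fun n => if n < N then g t₀ n else 0 with hudef
    set v : ℕ → Fin (K+1) := fun n => if n < N then g t₀ n else Fin.last K with hvdef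
    have huN : ∀ n, n < N → u n = g t₀ n := fun n hn => by simp [hudef, hn]
    have hu0 : ∀ n, N ≤ n → u n = 0 := fun n hn => by simp [hudef, Nat.not_lt.mpr hn]
    have hvN : ∀ n, n < N → v n = g t₀ n := fun n hn => by simp [hvdef, hn]
    have hvl : ∀ n, N ≤ n → v n = Fin.last K := fun n hn => by
      simp [hvdef, Nat.not_lt.mpr hn]
    have huQ : u ∈ exceptional K := Or.inr ⟨N, hu0⟩
    have hvQ : v ∈ exceptional K := Or.inl ⟨N, hvl⟩
    have hux : lexLt u (g t₀) := by
      rcases lexLt_trichot u (g t₀) with he | h | h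
      · exact absurd (he ▸ huQ) hx₀Q
      · exact h
      · exfalso
        obtain ⟨m, hm, hml⟩ := h
        by_cases hmN : m < N
        · rw [huN m hmN] at hml; exact lt_irrefl _ hml
        · rw [hu0 m (Nat.not_lt.mp hmN)] at hml
          exact Fin.not_lt_zero _ hml
    have hxv : lexLt (g t₀) v := by
      rcases lexLt_trichot (g t₀) v with he | h | h
      · exact absurd (he.symm ▸ hvQ) hx₀Q
      · exact h
      · exfalso
        obtain ⟨m, hm, hml⟩ := h
        by_cases hmN : m < N
        · rw [hvN m hmN] at hml; exact lt_irrefl _ hml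
        · rw [hvl m (Nat.not_lt.mp hmN)] at hml
          exact absurd hml (not_lt.mpr (Fin.le_last _))
    have hnau : ¬ Adj u (g t₀) := fun h => hx₀Q h.mem_exc_right
    have hnav : ¬ Adj (g t₀) v := fun h => hx₀Q h.mem_exc_left
    have hu_lt : hmap P u < t₀ := hx₀ ▸ hmap_lt hK hP' hux hnau
    have hv_gt : t₀ < hmap P v := hx₀ ▸ hmap_lt hK hP' hxv hnav
    have hball : ∀ᶠ t in nhdsWithin t₀ S, t ∈ Set.Ioo (hmap P u) (hmap P v) :=
      eventually_nhdsWithin_of_eventually_nhds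
        (Filter.eventually_of_mem (Ioo_mem_nhds hu_lt hv_gt) (fun t ht => ht))
    have hmemS : ∀ᶠ t in nhdsWithin t₀ S, t ∈ S := eventually_mem_nhdsWithin
    apply Filter.EventuallyEq.tendsto
    filter_upwards [hball, hmemS] with t ht htS
    have hgt : hmap P (g t) = t := hginv t htS
    have h1 : lexLe u (g t) := by
      rcases lexLt_trichot u (g t) with he | h | h
      · exact Or.inl he
      · exact Or.inr h
      · exfalso
        have hle := hmap_mono (P := P) (Or.inr h)
        rw [hgt] at hle
        exact absurd ht.1 (not_lt.mpr hle)
    have h2 : lexLe (g t) v := by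
      rcases lexLt_trichot (g t) v with he | h | h
      · exact Or.inl he
      · exact Or.inr h
      · exfalso
        have hle := hmap_mono (P := P) (Or.inr h)
        rw [hgt] at hle
        exact absurd ht.2 (not_lt.mpr hle)
    exact agree_of_between huN hu0 hvN hvl h1 h2 i (Nat.lt_succ_self i)
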